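/- Peak structure: Suppose the channel operator H is L-generic, and C_L is a norm-one common eigenfunction of {π(l) : l ∈ L}. Then |A(C_L, H(C_L))[v]| = |α_k| if v ∈ L + (τ_k,ω_k) for some k ∈ {1,…,r}, and |A(C_L, H(C_L))[v]| = 0 if v does not lie on any of the shifted lines L + (τ_k,ω_k). -/

import Mathlib

open Finset

/-- `e(t) = exp(2πit/N)` on `ℤ/N`. -/
noncomputable def eN (N : ℕ) [NeZero N] (t : ZMod N) : ℂ :=
  Complex.exp (2 * Real.pi * Complex.I * (t.val : ℂ) / N)

/-- Heisenberg operator `π(τ,ω)`. -/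
noncomputable def heis (N : ℕ) [NeZero N] (τ ω : ZMod N) (f : ZMod N → ℂ) : ZMod N → ℂ :=
  fun n => eN N (-(2⁻¹ * τ * ω)) * eN N (ω * n) * f (n - τ)

/-- Standard inner product on sequences. -/
noncomputable def inn (N : ℕ) [NeZero N] (f g : ZMod N → ℂ) : ℂ :=
  ∑ n : ZMod N, f n * (starRingEnd ℂ) (g n)

/-- Ambiguity function `A(f,g)[v] = ⟨π(v)f, g⟩`. -/
noncomputable def amb (N : ℕ) [NeZero N] (f g : ZMod N → ℂ) (v : ZMod N × ZMod N) : ℂ :=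
  inn N (heis N v.1 v.2 f) g

/-- Chirp sequence `C_{L_{a,b}}[n] = e(2⁻¹ a n² − b n)/√N`. -/
noncomputable def chirp (N : ℕ) [NeZero N] (a b : ZMod N) : ZMod N → ℂ :=
  fun n => eN N (2⁻¹ * a * n ^ 2 - b * n) / (Real.sqrt N : ℂ)

/-- Dirac delta sequence supported at `b`. -/
def deltaSeq (N : ℕ) (b : ZMod N) : ZMod N → ℂ :=
  fun n => if n = b then 1 else 0

/-- Channel operator `H(S)[n] = Σ_k α_k e(ω_k n) S[n−τ_k]`. -/
noncomputable def chanOp (N : ℕ) [NeZero N] (r : ℕ) (α : Fin r → ℂ)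
    (tw : Fin r → ZMod N × ZMod N) (S : ZMod N → ℂ) : ZMod N → ℂ :=
  fun n => ∑ k : Fin r, α k * eN N ((tw k).2 * n) * S (n - (tw k).1)

section helpers
variable (N : ℕ) [NeZero N]

lemma eN_eq_pow (t : ZMod N) :
    eN N t = Complex.exp (2 * Real.pi * Complex.I / N) ^ t.val := by
  rw [eN, ← Complex.exp_nat_mul]
  ring_nf

lemma zeta_pow (a : ℕ) :
    Complex.exp (2 * Real.pi * Complex.I / N) ^ (a % N)
      = Complex.exp (2 * Real.pi * Complex.I / N) ^ a := by
  have hζ : Complex.exp (2 * Real.pi * Complex.I / N) ^ N = 1 := by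
    rw [← Complex.exp_nat_mul]
    rw [mul_div_cancel₀ _ (by exact_mod_cast (NeZero.ne N) : (N:ℂ) ≠ 0)]
    exact Complex.exp_two_pi_mul_I
  conv_rhs => rw [← Nat.mod_add_div a N, pow_add, pow_mul, hζ, one_pow, mul_one]

lemma eN_add (s t : ZMod N) : eN N (s + t) = eN N s * eN N t := by
  rw [eN_eq_pow, eN_eq_pow, eN_eq_pow, ← pow_add, ZMod.val_add, zeta_pow]

lemma eN_zero : eN N 0 = 1 := by
  simp [eN]

lemma eN_neg_mul (t : ZMod N) : eN N (-t) * eN N t = 1 := by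
  rw [← eN_add, neg_add_cancel, eN_zero]

lemma abs_eN (t : ZMod N) : ‖eN N t‖ = 1 := by
  rw [eN, show 2 * Real.pi * Complex.I * (t.val : ℂ) / N
      = ((2 * Real.pi * t.val / N : ℝ) : ℂ) * Complex.I by push_cast; ring]
  exact Complex.norm_exp_ofReal_mul_I _

lemma conj_eN (t : ZMod N) : (starRingEnd ℂ) (eN N t) = eN N (-t) := by
  have h1 : eN N (-t) * eN N t = 1 := eN_neg_mul N t
  have h2 : (starRingEnd ℂ) (eN N t) * eN N t = 1 := by
    rw [mul_comm, Complex.mul_conj, ← Complex.sq_norm, abs_eN]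
    norm_num
  have hne : eN N t ≠ 0 := by
    intro h; rw [h, mul_zero] at h1; exact one_ne_zero h1.symm
  exact mul_right_cancel₀ hne (h2.trans h1.symm)

lemma eN_eq_one_iff (t : ZMod N) : eN N t = 1 ↔ t = 0 := by
  constructor
  · intro h
    rw [eN_eq_pow] at h
    have hprim := Complex.isPrimitiveRoot_exp N (NeZero.ne N)
    have hdvd : N ∣ t.val := (IsPrimitiveRoot.pow_eq_one_iff_dvd hprim t.val).mp h
    have := Nat.eq_zero_of_dvd_of_lt hdvd (ZMod.val_lt t)
    exact (ZMod.val_eq_zero t).mp this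
  · intro h; rw [h]; exact eN_zero N

lemma heis_smul (a b : ZMod N) (c : ℂ) (f : ZMod N → ℂ) :
    heis N a b (fun n => c * f n) = fun n => c * heis N a b f n := by
  funext n; simp only [heis]; ring

lemma heis_heis (h2 : (2⁻¹ : ZMod N) + 2⁻¹ = 1) (a b c d : ZMod N) (f : ZMod N → ℂ) :
    heis N a b (heis N c d f)
      = fun n => eN N (2⁻¹ * (c * b - a * d)) * heis N (a + c) (b + d) f n := by
  funext n
  show eN N (-(2⁻¹ * a * b)) * eN N (b * n) *
      (eN N (-(2⁻¹ * c * d)) * eN N (d * (n - a)) * f (n - a - c))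
      = eN N (2⁻¹ * (c * b - a * d)) *
        (eN N (-(2⁻¹ * (a + c) * (b + d))) * eN N ((b + d) * n) * f (n - (a + c)))
  have harg : n - (a + c) = n - a - c := by ring
  rw [harg]
  have l1 : eN N (-(2⁻¹ * a * b)) * eN N (b * n) *
      (eN N (-(2⁻¹ * c * d)) * eN N (d * (n - a)) * f (n - a - c))
      = eN N (-(2⁻¹ * a * b) + b * n + -(2⁻¹ * c * d) + d * (n - a)) * f (n - a - c) := by
    rw [eN_add, eN_add, eN_add]; ring
  have l2 : eN N (2⁻¹ * (c * b - a * d)) *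
      (eN N (-(2⁻¹ * (a + c) * (b + d))) * eN N ((b + d) * n) * f (n - a - c))
      = eN N (2⁻¹ * (c * b - a * d) + -(2⁻¹ * (a + c) * (b + d)) + (b + d) * n) * f (n - a - c) := by
    rw [eN_add, eN_add]; ring
  rw [l1, l2]
  congr 2
  linear_combination (a * d) * h2

lemma inn_heis (a b : ZMod N) (f g : ZMod N → ℂ) :
    inn N (heis N a b f) (heis N a b g) = inn N f g := by
  unfold inn heis
  have h : ∀ n : ZMod N,
      eN N (-(2⁻¹ * a * b)) * eN N (b * n) * f (n - a) *
        (starRingEnd ℂ) (eN N (-(2⁻¹ * a * b)) * eN N (b * n) * g (n - a))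
      = f (n - a) * (starRingEnd ℂ) (g (n - a)) := by
    intro n
    simp only [map_mul, conj_eN, neg_neg]
    have h1 := eN_neg_mul N (-(2⁻¹ * a * b))
    simp only [neg_neg] at h1
    have h2 := eN_neg_mul N (b * n)
    linear_combination (f (n - a) * (starRingEnd ℂ) (g (n - a)) * eN N (-(2⁻¹ * a * b)) *
        eN N (2⁻¹ * a * b)) * h2 + (f (n - a) * (starRingEnd ℂ) (g (n - a))) * h1
  rw [Finset.sum_congr rfl fun n _ => h n]
  exact Fintype.sum_equiv (Equiv.subRight a)
    (fun n => f (n - a) * (starRingEnd ℂ) (g (n - a)))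
    (fun m => f m * (starRingEnd ℂ) (g m)) (fun n => rfl)

lemma inn_smul_left (c : ℂ) (f g : ZMod N → ℂ) :
    inn N (fun n => c * f n) g = c * inn N f g := by
  simp only [inn, Finset.mul_sum]
  exact Finset.sum_congr rfl fun n _ => by ring

lemma inn_smul_right (c : ℂ) (f g : ZMod N → ℂ) :
    inn N f (fun n => c * g n) = (starRingEnd ℂ) c * inn N f g := by
  simp only [inn, map_mul, Finset.mul_sum]
  exact Finset.sum_congr rfl fun n _ => by ring

lemma inn_sum {r : ℕ} (f : ZMod N → ℂ) (c : Fin r → ℂ) (g : Fin r → ZMod N → ℂ) :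
    inn N f (fun n => ∑ k, c k * g k n) = ∑ k, (starRingEnd ℂ) (c k) * inn N f (g k) := by
  simp only [inn, map_sum, map_mul, Finset.mul_sum]
  rw [Finset.sum_comm]
  exact Finset.sum_congr rfl fun k _ => Finset.sum_congr rfl fun n _ => by ring

end helpers

theorem peak_structure (N : ℕ) [NeZero N] (hN : N.Prime) (hodd : Odd N)
    (r : ℕ) (α : Fin r → ℂ) (tw : Fin r → ZMod N × ZMod N) (htw : Function.Injective tw)
    (L : Submodule (ZMod N) (ZMod N × ZMod N))
    (hL1 : Module.finrank (ZMod N) L = 1)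
    (hgen : ∀ j k, j ≠ k → tw j - tw k ∉ L)
    (CL : ZMod N → ℂ) (hnorm : inn N CL CL = 1)
    (ψL : L → ℂ) (hunit : ∀ l : L, ‖ψL l‖ = 1)
    (hCL : ∀ l : L, heis N (l : ZMod N × ZMod N).1 (l : ZMod N × ZMod N).2 CL
        = fun n => ψL l * CL n) :
    (∀ (k : Fin r) (v : ZMod N × ZMod N), v - tw k ∈ L →
        ‖amb N CL (chanOp N r α tw CL) v‖ = ‖α k‖) ∧
    (∀ v : ZMod N × ZMod N, (∀ k : Fin r, v - tw k ∉ L) →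
        amb N CL (chanOp N r α tw CL) v = 0) := by
  haveI : Fact N.Prime := ⟨hN⟩
  have h20 : (2 : ZMod N) ≠ 0 := by
    intro h
    have h' : ((2 : ℕ) : ZMod N) = 0 := by exact_mod_cast h
    rw [ZMod.natCast_eq_zero_iff] at h'
    have hN2 : N = 2 := (Nat.prime_dvd_prime_iff_eq hN Nat.prime_two).mp h'
    rw [hN2] at hodd
    exact absurd hodd (by decide)
  have h2 : (2⁻¹ : ZMod N) + 2⁻¹ = 1 := by
    have h := inv_mul_cancel₀ h20
    linear_combination h
  -- vanishing of the auto-ambiguity off L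
  have hG0 : ∀ u : ZMod N × ZMod N, u ∉ L → inn N (heis N u.1 u.2 CL) CL = 0 := by
    intro u hu
    have hLbot : L ≠ ⊥ := by
      intro h; rw [h, finrank_bot] at hL1; simp at hL1
    obtain ⟨l, hl, hl0⟩ := Submodule.exists_mem_ne_zero_of_ne_bot hLbot
    have hσ : u.1 * l.2 - l.1 * u.2 ≠ 0 := by
      intro h
      apply hu
      by_cases h1 : l.1 = 0
      · have hl2 : l.2 ≠ 0 := by
          intro hh; exact hl0 (Prod.ext h1 hh)
        have hu1 : u.1 = 0 := by
          have hh : u.1 * l.2 = 0 := by rw [h1] at h; linear_combination h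
          exact (mul_eq_zero.mp hh).resolve_right hl2
        have huel : u = (u.2 * l.2⁻¹) • l := by
          apply Prod.ext
          · rw [Prod.smul_fst, smul_eq_mul, h1, mul_zero, hu1]
          · rw [Prod.smul_snd, smul_eq_mul, mul_assoc, inv_mul_cancel₀ hl2, mul_one]
        rw [huel]; exact L.smul_mem _ hl
      · have huel : u = (u.1 * l.1⁻¹) • l := by
          apply Prod.ext
          · rw [Prod.smul_fst, smul_eq_mul, mul_assoc, inv_mul_cancel₀ h1, mul_one]
          · rw [Prod.smul_snd, smul_eq_mul]
            field_simp
            linear_combination (-1 : ZMod N) * h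
        rw [huel]; exact L.smul_mem _ hl
    set ψ := ψL ⟨l, hl⟩ with hψdef
    have hψabs : ‖ψ‖ = 1 := hunit _
    have hψconj : (starRingEnd ℂ) ψ * ψ = 1 := by
      rw [mul_comm, Complex.mul_conj, ← Complex.sq_norm, hψabs]
      norm_num
    have hlCL : heis N l.1 l.2 CL = fun n => ψ * CL n := hCL ⟨l, hl⟩
    set α' := (2⁻¹ : ZMod N) * (l.1 * u.2 - u.1 * l.2) with hα'
    have hfun1 : (fun n => ψ * heis N u.1 u.2 CL n)
        = fun n => eN N α' * heis N (u.1 + l.1) (u.2 + l.2) CL n := by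
      rw [← heis_smul, ← hlCL, heis_heis N h2]
    have e1 : ψ * inn N (heis N u.1 u.2 CL) CL
        = eN N α' * inn N (heis N (u.1 + l.1) (u.2 + l.2) CL) CL := by
      rw [← inn_smul_left, ← inn_smul_left, hfun1]
    have hfun2 := heis_heis N h2 l.1 l.2 u.1 u.2 CL
    rw [add_comm l.1 u.1, add_comm l.2 u.2] at hfun2
    have e2 : inn N (heis N u.1 u.2 CL) CL
        = (starRingEnd ℂ) ψ *
            (eN N (-α') * inn N (heis N (u.1 + l.1) (u.2 + l.2) CL) CL) := by
      have hx := inn_heis N l.1 l.2 (heis N u.1 u.2 CL) CL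
      rw [hlCL, inn_smul_right, hfun2, inn_smul_left] at hx
      rw [show (2⁻¹ : ZMod N) * (u.1 * l.2 - l.1 * u.2) = -α' by rw [hα']; ring] at hx
      exact hx.symm
    have e3 : inn N (heis N (u.1 + l.1) (u.2 + l.2) CL) CL
        = eN N (-α') * (ψ * inn N (heis N u.1 u.2 CL) CL) := by
      linear_combination (-(eN N (-α'))) * e1
        + (-(inn N (heis N (u.1 + l.1) (u.2 + l.2) CL) CL)) * (eN_neg_mul N α')
    have e4 : eN N (-α') * eN N (-α') * ((starRingEnd ℂ) ψ * ψ) *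
        inn N (heis N u.1 u.2 CL) CL = inn N (heis N u.1 u.2 CL) CL := by
      linear_combination (-(1 : ℂ)) * e2 + (-((starRingEnd ℂ) ψ * eN N (-α'))) * e3
    rw [hψconj, mul_one] at e4
    have hexp : -α' + -α' = u.1 * l.2 - l.1 * u.2 := by
      rw [hα']; linear_combination (-(l.1 * u.2 - u.1 * l.2)) * h2
    have e5 : eN N (u.1 * l.2 - l.1 * u.2) * inn N (heis N u.1 u.2 CL) CL
        = inn N (heis N u.1 u.2 CL) CL := by
      rw [← hexp, eN_add]; exact e4
    have hfac : (eN N (u.1 * l.2 - l.1 * u.2) - 1) * inn N (heis N u.1 u.2 CL) CL = 0 := by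
      linear_combination e5
    rcases mul_eq_zero.mp hfac with h' | h'
    · exact absurd (by linear_combination h' : eN N (u.1 * l.2 - l.1 * u.2) = 1)
        (fun hh => hσ ((eN_eq_one_iff N _).mp hh))
    · exact h'
  -- value of the auto-ambiguity on L
  have hGmem : ∀ u : ZMod N × ZMod N, ∀ hu : u ∈ L,
      inn N (heis N u.1 u.2 CL) CL = ψL ⟨u, hu⟩ := by
    intro u hu
    rw [hCL ⟨u, hu⟩, inn_smul_left, hnorm, mul_one]
  -- rewriting the channel output
  have hchan : chanOp N r α tw CL
      = fun n => ∑ k, (α k * eN N (2⁻¹ * (tw k).1 * (tw k).2)) *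
          heis N (tw k).1 (tw k).2 CL n := by
    funext n
    refine Finset.sum_congr rfl fun k _ => ?_
    show α k * eN N ((tw k).2 * n) * CL (n - (tw k).1)
        = α k * eN N (2⁻¹ * (tw k).1 * (tw k).2) *
          (eN N (-(2⁻¹ * (tw k).1 * (tw k).2)) * eN N ((tw k).2 * n) * CL (n - (tw k).1))
    have h := eN_neg_mul N (2⁻¹ * (tw k).1 * (tw k).2)
    linear_combination (-(α k * eN N ((tw k).2 * n) * CL (n - (tw k).1))) * h
  -- cross terms
  have hTT : ∀ v w : ZMod N × ZMod N,
      inn N (heis N v.1 v.2 CL) (heis N w.1 w.2 CL)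
        = eN N (-(2⁻¹ * ((v - w).1 * w.2 - w.1 * (v - w).2))) *
            inn N (heis N (v - w).1 (v - w).2 CL) CL := by
    intro v w
    have hh := heis_heis N h2 w.1 w.2 (v - w).1 (v - w).2 CL
    have hc1 : w.1 + (v - w).1 = v.1 := by simp
    have hc2 : w.2 + (v - w).2 = v.2 := by simp
    rw [hc1, hc2] at hh
    have hv : heis N v.1 v.2 CL
        = fun n => eN N (-(2⁻¹ * ((v - w).1 * w.2 - w.1 * (v - w).2))) *
            heis N w.1 w.2 (heis N (v - w).1 (v - w).2 CL) n := by
      funext n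
      rw [hh]
      have h := eN_neg_mul N (2⁻¹ * ((v - w).1 * w.2 - w.1 * (v - w).2))
      linear_combination (-(heis N v.1 v.2 CL n)) * h
    rw [hv, inn_smul_left, inn_heis]
  -- the expanded ambiguity
  have hamb : ∀ v : ZMod N × ZMod N,
      amb N CL (chanOp N r α tw CL) v
        = ∑ k, (starRingEnd ℂ) (α k * eN N (2⁻¹ * (tw k).1 * (tw k).2)) *
            (eN N (-(2⁻¹ * ((v - tw k).1 * (tw k).2 - (tw k).1 * (v - tw k).2))) *
              inn N (heis N (v - tw k).1 (v - tw k).2 CL) CL) := by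
    intro v
    show inn N (heis N v.1 v.2 CL) (chanOp N r α tw CL) = _
    rw [hchan, inn_sum]
    exact Finset.sum_congr rfl fun k _ => by rw [hTT v (tw k)]
  constructor
  · intro k v hvk
    rw [hamb v]
    rw [Finset.sum_eq_single_of_mem k (Finset.mem_univ k) ?_]
    · rw [hGmem (v - tw k) hvk]
      simp [map_mul, abs_eN, Complex.norm_conj, hunit]
    · intro j _ hj
      have hnot : v - tw j ∉ L := by
        intro hmem
        exact hgen k j (Ne.symm hj)
          (by simpa [show (v - tw j) - (v - tw k) = tw k - tw j from by ring]
            using L.sub_mem hmem hvk)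
      rw [hG0 _ hnot, mul_zero, mul_zero]
  · intro v hv
    rw [hamb v]
    exact Finset.sum_eq_zero fun k _ => by rw [hG0 _ (hv k), mul_zero, mul_zero]
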